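/- Let k be a field of characteristic zero, B a k-domain, D a locally nilpotent k-derivation with slice s, and A = Ker D. Define the Dixmier map π_s : B → B by π_s(f) = Σ_{i≥0} ((-1)^i / i!) D^i(f) s^i. Then π_s is a k-algebra homomorphism with image A and kernel equal to the ideal sB. -/

import Mathlib

/-- A derivation is *locally nilpotent* if every element is killed by some iterate. -/
def IsLND {k B : Type*} [CommRing k] [CommRing B] [Algebra k B]
    (D : Derivation k B B) : Prop :=
  ∀ b : B, ∃ n : ℕ, (D.toLinearMap ^ n) b = 0

/-- A derivation *has a slice* if `1` is in its image. -/
def HasSlice {k B : Type*} [CommRing k] [CommRing B] [Algebra k B]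
    (D : Derivation k B B) : Prop :=
  ∃ s : B, D s = 1

/-- The kernel of a derivation, as a subalgebra. -/
def lndKer {k B : Type*} [CommRing k] [CommRing B] [Algebra k B]
    (D : Derivation k B B) : Subalgebra k B where
  carrier := {b | D b = 0}
  mul_mem' := by
    intro a b ha hb
    simp only [Set.mem_setOf_eq] at *
    simp [D.leibniz, ha, hb]
  add_mem' := by
    intro a b ha hb
    simp only [Set.mem_setOf_eq] at *
    simp [ha, hb]
  algebraMap_mem' := fun r => D.map_algebraMap r

/-- The Makar-Limanov invariant: intersection of the kernels of all locally
nilpotent derivations. -/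
def ML (k : Type*) {B : Type*} [CommRing k] [CommRing B] [Algebra k B] : Subalgebra k B :=
  ⨅ D ∈ {D : Derivation k B B | IsLND D}, lndKer D

/-- The Makar-Limanov–Freudenburg invariant: intersection of the kernels of all locally
nilpotent derivations admitting a slice (equal to `⊤ = B` if none exist). -/
def MLstar (k : Type*) {B : Type*} [CommRing k] [CommRing B] [Algebra k B] : Subalgebra k B :=
  ⨅ D ∈ {D : Derivation k B B | IsLND D ∧ HasSlice D}, lndKer D

/-- A `k`-algebra is *rigid* if it admits no nonzero locally nilpotent derivation. -/
def IsRigid (k B : Type*) [CommRing k] [CommRing B] [Algebra k B] : Prop :=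
  ∀ D : Derivation k B B, IsLND D → D = 0

/-- The extension `A ⊆ B` has transcendence degree `n`. -/
def TrdegEq (A B : Type*) [CommRing A] [CommRing B] [Algebra A B] (n : ℕ) : Prop :=
  (∃ x : Fin n → B, AlgebraicIndependent A x) ∧
    ∀ x : Fin (n + 1) → B, ¬ AlgebraicIndependent A x

/-- A subring `A` of a domain `B` is *inert* if `f * g ∈ A` for nonzero `f, g`
implies `f ∈ A` and `g ∈ A`. -/
def IsInert {B : Type*} [CommRing B] (A : Subring B) : Prop :=
  ∀ f g : B, f ≠ 0 → g ≠ 0 → f * g ∈ A → f ∈ A ∧ g ∈ A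


set_option linter.unusedSectionVars false
open Finset

section DixAux

variable {k B : Type*} [Field k] [CharZero k] [CommRing B] [Algebra k B]
variable (D : Derivation k B B)

/-- The coefficients `(-1)^i / i!`. -/
noncomputable def dixc (k : Type*) [Field k] (i : ℕ) : k :=
  (-1 : k) ^ i * ((Nat.factorial i : k)⁻¹)

lemma dixc_zero : dixc k 0 = 1 := by simp [dixc]

lemma dixc_one : dixc k 1 = -1 := by simp [dixc]

lemma dixc_succ (i : ℕ) : ((i : k) + 1) * dixc k (i + 1) = - dixc k i := by
  have h0 : (Nat.factorial i : k) ≠ 0 := Nat.cast_ne_zero.2 (Nat.factorial_ne_zero i)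
  have h1 : ((i : k) + 1) ≠ 0 := by
    have := Nat.cast_add_one_ne_zero (R := k) i
    exact_mod_cast this
  have hfac : ((i+1).factorial : k) = ((i : k) + 1) * (Nat.factorial i : k) := by
    rw [Nat.factorial_succ]; push_cast; ring
  rw [dixc, dixc, hfac, pow_succ, mul_inv]
  field_simp

lemma dixc_mul_choose (i j : ℕ) :
    dixc k (i + j) * ((i + j).choose i : k) = dixc k i * dixc k j := by
  have hle : i ≤ i + j := Nat.le_add_right i j
  rw [Nat.cast_choose k hle]
  have h0 : (Nat.factorial i : k) ≠ 0 := Nat.cast_ne_zero.2 (Nat.factorial_ne_zero i)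
  have h1 : (Nat.factorial j : k) ≠ 0 := Nat.cast_ne_zero.2 (Nat.factorial_ne_zero j)
  have h2 : (Nat.factorial (i+j) : k) ≠ 0 := Nat.cast_ne_zero.2 (Nat.factorial_ne_zero _)
  have hij : i + j - i = j := by omega
  rw [hij, dixc, dixc, dixc, pow_add]
  field_simp

lemma dpow_zero_mono {f : B} {n m : ℕ} (h : (D.toLinearMap ^ n) f = 0) (hnm : n ≤ m) :
    (D.toLinearMap ^ m) f = 0 := by
  obtain ⟨r, rfl⟩ := Nat.exists_eq_add_of_le hnm
  rw [add_comm, pow_add, Module.End.mul_apply, h, map_zero]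

/-- One term of the Dixmier series. -/
noncomputable def dterm (s f : B) (i : ℕ) : B :=
  dixc k i • ((D.toLinearMap ^ i) f * s ^ i)

/-- The Dixmier map as a bare function. -/
noncomputable def dixfun (s f : B) : B := ∑ᶠ i : ℕ, dterm D s f i

lemma dixfun_eq_sum {s f : B} {n : ℕ} (h : (D.toLinearMap ^ n) f = 0) :
    dixfun D s f = ∑ i ∈ range n, dterm D s f i := by
  apply finsum_eq_finset_sum_of_support_subset
  intro i hi
  simp only [Function.mem_support] at hi
  by_contra hc
  simp only [coe_range, Set.mem_Iio, not_lt] at hc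
  exact hi (by simp [dterm, dpow_zero_mono D h hc])

/-- Iterated Leibniz rule. -/
lemma iter_leibniz (f g : B) (n : ℕ) :
    (D.toLinearMap ^ n) (f * g) =
      ∑ i ∈ range (n + 1),
        n.choose i • ((D.toLinearMap ^ i) f * (D.toLinearMap ^ (n - i)) g) := by
  induction n with
  | zero => simp
  | succ n ih =>
    have hstep : (D.toLinearMap ^ (n + 1)) (f * g)
        = D ((D.toLinearMap ^ n) (f * g)) := by
      rw [pow_succ', Module.End.mul_apply]; rfl
    have hD1 : ∀ (i : ℕ), D ((D.toLinearMap ^ i) f) = (D.toLinearMap ^ (i+1)) f := by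
      intro i; rw [pow_succ', Module.End.mul_apply]; rfl
    have hD2 : ∀ (i : ℕ), D ((D.toLinearMap ^ i) g) = (D.toLinearMap ^ (i+1)) g := by
      intro i; rw [pow_succ', Module.End.mul_apply]; rfl
    rw [hstep, ih, map_sum]
    have hterm : ∀ i ∈ range (n + 1),
        D (n.choose i • ((D.toLinearMap ^ i) f * (D.toLinearMap ^ (n - i)) g))
          = n.choose i • ((D.toLinearMap ^ (i+1)) f * (D.toLinearMap ^ (n - i)) g)
            + n.choose i • ((D.toLinearMap ^ i) f * (D.toLinearMap ^ (n - i + 1)) g) := by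
      intro i _
      rw [map_nsmul, Derivation.leibniz, smul_eq_mul, smul_eq_mul, ← hD1, ← hD2, smul_add]
      ring_nf
    rw [Finset.sum_congr rfl hterm, Finset.sum_add_distrib]
    -- RHS: split the target sum
    have htgt : ∑ i ∈ range (n + 2),
        (n+1).choose i • ((D.toLinearMap ^ i) f * (D.toLinearMap ^ (n + 1 - i)) g)
        = ∑ i ∈ range (n + 1),
            (n+1).choose (i+1) • ((D.toLinearMap ^ (i+1)) f * (D.toLinearMap ^ (n - i)) g)
          + (f * (D.toLinearMap ^ (n+1)) g) := by
      rw [Finset.sum_range_succ' (fun i =>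
        (n+1).choose i • ((D.toLinearMap ^ i) f * (D.toLinearMap ^ (n + 1 - i)) g)) (n+1)]
      congr 1
      · apply Finset.sum_congr rfl
        intro i hi
        simp only [mem_range] at hi
        have : n + 1 - (i + 1) = n - i := by omega
        rw [this]
      · simp
    rw [htgt]
    have hpascal : ∀ i ∈ range (n+1),
        (n+1).choose (i+1) • ((D.toLinearMap ^ (i+1)) f * (D.toLinearMap ^ (n - i)) g)
        = n.choose i • ((D.toLinearMap ^ (i+1)) f * (D.toLinearMap ^ (n - i)) g)
          + n.choose (i+1) • ((D.toLinearMap ^ (i+1)) f * (D.toLinearMap ^ (n - i)) g) := by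
      intro i _
      rw [Nat.choose_succ_succ, add_smul]
    rw [Finset.sum_congr rfl hpascal, Finset.sum_add_distrib]
    have hsecond : ∑ i ∈ range (n + 1),
        n.choose i • ((D.toLinearMap ^ i) f * (D.toLinearMap ^ (n - i + 1)) g)
        = ∑ i ∈ range (n + 1),
            n.choose (i+1) • ((D.toLinearMap ^ (i+1)) f * (D.toLinearMap ^ (n - i)) g)
          + (f * (D.toLinearMap ^ (n+1)) g) := by
      rw [Finset.sum_range_succ' (fun i =>
        n.choose i • ((D.toLinearMap ^ i) f * (D.toLinearMap ^ (n - i + 1)) g)) n]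
      have hlast : ∑ i ∈ range (n+1),
          n.choose (i+1) • ((D.toLinearMap ^ (i+1)) f * (D.toLinearMap ^ (n - i)) g)
          = ∑ i ∈ range n,
          n.choose (i+1) • ((D.toLinearMap ^ (i+1)) f * (D.toLinearMap ^ (n - i)) g) := by
        rw [Finset.sum_range_succ]
        simp [Nat.choose_succ_self]
      rw [hlast]
      congr 1
      · apply Finset.sum_congr rfl
        intro i hi
        simp only [mem_range] at hi
        have : n - (i + 1) + 1 = n - i := by omega
        rw [this]
      · simp
    rw [hsecond]
    abel

end DixAux

section DixMain
variable {k B : Type*} [Field k] [CharZero k] [CommRing B] [Algebra k B]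
variable (D : Derivation k B B)

lemma dixfun_add (hD : IsLND D) (s f g : B) :
    dixfun D s (f + g) = dixfun D s f + dixfun D s g := by
  obtain ⟨n, hn⟩ := hD f; obtain ⟨m, hm⟩ := hD g
  have hn' : (D.toLinearMap ^ max n m) f = 0 := dpow_zero_mono D hn (le_max_left _ _)
  have hm' : (D.toLinearMap ^ max n m) g = 0 := dpow_zero_mono D hm (le_max_right _ _)
  have hfg : (D.toLinearMap ^ max n m) (f + g) = 0 := by rw [map_add, hn', hm', add_zero]
  rw [dixfun_eq_sum D hfg, dixfun_eq_sum D hn', dixfun_eq_sum D hm', ← Finset.sum_add_distrib]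
  exact Finset.sum_congr rfl fun i _ => by simp [dterm, add_mul, smul_add]

lemma dterm_eq_zero_of_le {f : B} {n : ℕ} (hn : (D.toLinearMap ^ n) f = 0) (s : B)
    {i : ℕ} (hi : n ≤ i) : dterm D s f i = 0 := by
  simp [dterm, dpow_zero_mono D hn hi]

lemma dixfun_mul (hD : IsLND D) (s f g : B) :
    dixfun D s (f * g) = dixfun D s f * dixfun D s g := by
  obtain ⟨n0, hn0⟩ := hD f
  obtain ⟨m0, hm0⟩ := hD g
  set N := n0 + 1 with hNdef
  set M := m0 + 1 with hMdef
  have hN : (D.toLinearMap ^ N) f = 0 := dpow_zero_mono D hn0 (Nat.le_succ _)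
  have hM : (D.toLinearMap ^ M) g = 0 := dpow_zero_mono D hm0 (Nat.le_succ _)
  set K := N + M with hKdef
  have hfg : (D.toLinearMap ^ K) (f * g) = 0 := by
    rw [iter_leibniz]
    apply Finset.sum_eq_zero
    intro i hi
    simp only [mem_range] at hi
    by_cases hiN : N ≤ i
    · rw [dpow_zero_mono D hN hiN, zero_mul, smul_zero]
    · have : M ≤ K - i := by omega
      rw [dpow_zero_mono D hM this, mul_zero, smul_zero]
  set F : ℕ × ℕ → B := fun p => dterm D s f p.1 * dterm D s g p.2 with hF
  have hFzero : ∀ p : ℕ × ℕ, (N ≤ p.1 ∨ M ≤ p.2) → F p = 0 := by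
    rintro p (h | h)
    · rw [hF]; simp [dterm_eq_zero_of_le D hN s h]
    · rw [hF]; simp [dterm_eq_zero_of_le D hM s h]
  have hterm : ∀ nn ∈ range K, dterm D s (f * g) nn
      = ∑ i ∈ range (nn + 1), F (i, nn - i) := by
    intro nn _
    rw [dterm, iter_leibniz, Finset.sum_mul, Finset.smul_sum]
    apply Finset.sum_congr rfl
    intro i hi
    simp only [mem_range] at hi
    have hij : i + (nn - i) = nn := by omega
    have hc := dixc_mul_choose (k := k) i (nn - i)
    rw [hij] at hc
    have hsp : s ^ nn = s ^ i * s ^ (nn - i) := by rw [← pow_add, hij]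
    rw [smul_mul_assoc, ← Nat.cast_smul_eq_nsmul k, smul_smul, hc]
    simp only [hF, dterm]
    rw [smul_mul_smul_comm]
    congr 1
    rw [hsp]; ring
  rw [dixfun_eq_sum D hfg, dixfun_eq_sum D hN, dixfun_eq_sum D hM, Finset.sum_mul_sum,
    Finset.sum_congr rfl hterm]
  have lhs_eq : ∑ nn ∈ range K, ∑ i ∈ range (nn + 1), F (i, nn - i)
      = ∑ p ∈ (range K ×ˢ range K).filter (fun p => p.1 + p.2 < K), F p := by
    rw [Finset.sum_sigma' (range K) (fun nn => range (nn + 1)) (fun nn i => F (i, nn - i))]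
    apply Finset.sum_nbij' (fun x => (x.2, x.1 - x.2)) (fun p => ⟨p.1 + p.2, p.1⟩)
    · rintro ⟨nn, i⟩ hx
      simp only [Finset.mem_sigma, mem_range] at hx
      simp only [Finset.mem_filter, Finset.mem_product, mem_range]
      omega
    · rintro ⟨a, b⟩ hp
      simp only [Finset.mem_filter, Finset.mem_product, mem_range] at hp
      simp only [Finset.mem_sigma, mem_range]
      omega
    · rintro ⟨nn, i⟩ hx
      simp only [Finset.mem_sigma, mem_range] at hx
      have h : i + (nn - i) = nn := by omega
      rw [h]
    · rintro ⟨a, b⟩ hp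
      simp only [Finset.mem_filter, Finset.mem_product, mem_range] at hp
      have h : a + b - a = b := by omega
      simp [h]
    · rintro ⟨nn, i⟩ hx
      rfl
  rw [lhs_eq]
  have lhs_eq2 : ∑ p ∈ (range K ×ˢ range K).filter (fun p => p.1 + p.2 < K), F p
      = ∑ p ∈ range K ×ˢ range K, F p := by
    apply Finset.sum_subset (Finset.filter_subset _ _)
    intro p hp hp'
    simp only [Finset.mem_filter, Finset.mem_product, mem_range] at hp hp'
    exact hFzero p (by omega)
  have rhs_eq : ∑ p ∈ range K ×ˢ range K, F p = ∑ p ∈ range N ×ˢ range M, F p := by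
    symm
    apply Finset.sum_subset
    · intro p hp
      simp only [Finset.mem_product, mem_range] at hp ⊢
      omega
    · intro p hp hp'
      simp only [Finset.mem_product, mem_range] at hp hp'
      exact hFzero p (by omega)
  rw [lhs_eq2, rhs_eq, Finset.sum_product]

end DixMain
section DixMain2
variable {k B : Type*} [Field k] [CharZero k] [CommRing B] [Algebra k B]
variable (D : Derivation k B B)

lemma dixfun_of_ker (s : B) {a : B} (ha : D a = 0) : dixfun D s a = a := by
  have h1 : (D.toLinearMap ^ 1) a = 0 := by simpa using ha
  rw [dixfun_eq_sum D h1, Finset.sum_range_one]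
  simp [dterm, dixc_zero]

lemma D_pow_succ (f : B) (i : ℕ) : D ((D.toLinearMap ^ i) f) = (D.toLinearMap ^ (i+1)) f := by
  rw [pow_succ', Module.End.mul_apply]; rfl

lemma D_dixfun (hD : IsLND D) {s : B} (hs : D s = 1) (f : B) :
    D (dixfun D s f) = 0 := by
  obtain ⟨n0, hn0⟩ := hD f
  have hn : (D.toLinearMap ^ (n0 + 1)) f = 0 := dpow_zero_mono D hn0 (Nat.le_succ _)
  rw [dixfun_eq_sum D hn, map_sum]
  set U : ℕ → B := fun j => dixc k j • ((D.toLinearMap ^ (j+1)) f * s ^ j) with hU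
  have h0 : D (dterm D s f 0) = U 0 := by
    simp only [dterm, hU, dixc_zero, pow_zero, mul_one, one_smul]
    rw [← D_pow_succ D f 0]
    rfl
  have hsucc : ∀ i : ℕ, D (dterm D s f (i+1)) = U (i+1) - U i := by
    intro i
    have hone : i + 1 - 1 = i := Nat.succ_sub_one i
    rw [dterm, Derivation.map_smul, Derivation.leibniz, Derivation.leibniz_pow, hs, hone,
      D_pow_succ]
    simp only [smul_eq_mul, mul_one]
    rw [smul_add]
    have hfirst : dixc k (i+1) • ((D.toLinearMap ^ (i+1)) f * ((i+1) • s ^ i)) = - U i := by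
      rw [mul_smul_comm, ← Nat.cast_smul_eq_nsmul k, smul_smul]
      have hcc : dixc k (i+1) * ((i+1 : ℕ) : k) = - dixc k i := by
        push_cast
        rw [mul_comm]
        exact dixc_succ i
      rw [hcc, neg_smul, hU]
    have hsecond : dixc k (i+1) • (s ^ (i+1) * (D.toLinearMap ^ (i+1+1)) f) = U (i+1) := by
      rw [hU, mul_comm]
    rw [hfirst, hsecond]
    abel
  rw [Finset.sum_range_succ' (fun i => D (dterm D s f i)) n0, h0,
    Finset.sum_congr rfl (fun i _ => hsucc i), Finset.sum_range_sub U n0, sub_add_cancel]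
  simp [hU, hn]

lemma dixfun_slice {s : B} (hs : D s = 1) : dixfun D s s = 0 := by
  have h2 : (D.toLinearMap ^ 2) s = 0 := by
    rw [← D_pow_succ D s 1]
    have : (D.toLinearMap ^ 1) s = 1 := by simpa using hs
    rw [this]
    exact D.map_one_eq_zero
  rw [dixfun_eq_sum D h2, Finset.sum_range_succ, Finset.sum_range_one]
  simp [dterm, dixc_zero, dixc_one, hs]

lemma sub_dixfun_mem (hD : IsLND D) (s f : B) :
    f - dixfun D s f ∈ Ideal.span {s} := by
  obtain ⟨n0, hn0⟩ := hD f
  have hn : (D.toLinearMap ^ (n0 + 1)) f = 0 := dpow_zero_mono D hn0 (Nat.le_succ _)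
  rw [dixfun_eq_sum D hn, Finset.sum_range_succ' (dterm D s f) n0]
  have h0 : dterm D s f 0 = f := by simp [dterm, dixc_zero]
  rw [h0]
  have hre : f - (∑ i ∈ Finset.range n0, dterm D s f (i+1) + f)
      = - ∑ i ∈ Finset.range n0, dterm D s f (i+1) := by ring
  rw [hre]
  apply neg_mem
  apply Submodule.sum_mem
  intro i _
  have hdec : dterm D s f (i+1)
      = (dixc k (i+1) • ((D.toLinearMap ^ (i+1)) f * s ^ i)) * s := by
    rw [dterm, pow_succ s i, ← mul_assoc, smul_mul_assoc]
  rw [hdec]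
  exact Ideal.mul_mem_left _ _ (Ideal.subset_span rfl)

end DixMain2

noncomputable def dixAlgHom {k B : Type*} [Field k] [CharZero k] [CommRing B] [Algebra k B]
    (D : Derivation k B B) (hD : IsLND D) (s : B) : B →ₐ[k] B where
  toFun := dixfun D s
  map_one' := dixfun_of_ker D s D.map_one_eq_zero
  map_mul' := dixfun_mul D hD s
  map_zero' := dixfun_of_ker D s (map_zero D)
  map_add' := dixfun_add D hD s
  commutes' := fun r => dixfun_of_ker D s (D.map_algebraMap r)

/-- Slice theorem, part (b): the Dixmier map `π_s` is a `k`-algebra homomorphism with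
image `Ker D` and kernel the ideal `sB`. -/
theorem stmt_8 {k B : Type*} [Field k] [CharZero k] [CommRing B] [IsDomain B] [Algebra k B]
    (D : Derivation k B B) (hD : IsLND D) (s : B) (hs : D s = 1) :
    ∃ π : B →ₐ[k] B,
      (∀ f : B, π f = ∑ᶠ i : ℕ,
        ((-1 : k) ^ i * ((Nat.factorial i : k)⁻¹)) • ((D.toLinearMap ^ i) f * s ^ i)) ∧
      Set.range π = (lndKer D : Set B) ∧
      (∀ f : B, π f = 0 ↔ f ∈ Ideal.span {s}) := by
  refine ⟨dixAlgHom D hD s, fun f => rfl, ?_, ?_⟩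
  · ext b
    constructor
    · rintro ⟨f, rfl⟩
      exact D_dixfun D hD hs f
    · intro hb
      exact ⟨b, dixfun_of_ker D s hb⟩
  · intro f
    constructor
    · intro h
      have h' : dixfun D s f = 0 := h
      have hmem := sub_dixfun_mem D hD s f
      rw [h', sub_zero] at hmem
      exact hmem
    · intro hf
      rw [Ideal.mem_span_singleton] at hf
      obtain ⟨c, rfl⟩ := hf
      show dixfun D s (s * c) = 0
      rw [dixfun_mul D hD, dixfun_slice D hs, zero_mul]
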